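/- Under the AAGD dynamics with parameter choice θ^k = 2/(k+2), if the step size satisfies 2γL + 3γL(τ² + 3τ)² ≤ 1 and the first τ iterations are performed serially (j(k) = k for every k < τ), then for every K ≥ 0, F(x^{K+1}) − F(x^*) ≤ (θ^K)² · (1/(2γ)) · ‖z^0 − x^*‖², where θ^K = 2/(K+2). -/

import Mathlib

open scoped RealInnerProductSpace
open Filter Topology Finset

/-! ### Auxiliary analytic lemmas -/

/-- Gradient inequality for convex functions. -/
theorem convex_grad_ineq {H : Type*} [NormedAddCommGroup H] [InnerProductSpace ℝ H]
    [CompleteSpace H] (f : H → ℝ) (f' : H → H)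
    (hf_conv : ConvexOn ℝ Set.univ f)
    (hf_grad : ∀ u, HasGradientAt f (f' u) u)
    (v u : H) : f v + ⟪f' v, u - v⟫ ≤ f u := by
  set φ : ℝ → ℝ := fun t => f (v + t • (u - v)) with hφ
  have hc : HasDerivAt (fun t : ℝ => v + t • (u - v)) (u - v) 0 := by
    simpa using ((hasDerivAt_id (0:ℝ)).smul_const (u - v)).const_add v
  have hd : HasDerivAt φ ⟪f' v, u - v⟫ 0 := by
    have := (hf_grad (v + (0:ℝ) • (u - v))).hasFDerivAt.comp_hasDerivAt 0 hc
    simpa [hφ, Function.comp_def] using this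
  have hslope : Tendsto (slope φ 0) (𝓝[>] 0) (𝓝 ⟪f' v, u - v⟫) :=
    (hasDerivAt_iff_tendsto_slope.1 hd).mono_left
      (nhdsWithin_mono _ (fun t ht => ne_of_gt ht))
  have hev : ∀ᶠ t in 𝓝[>] (0:ℝ), slope φ 0 t ≤ f u - f v := by
    filter_upwards [Ioo_mem_nhdsGT_of_mem (Set.mem_Ico.2 ⟨le_refl (0:ℝ), one_pos⟩)]
      with t ht
    obtain ⟨ht0, ht1⟩ := ht
    have hcomb : f ((1 - t) • v + t • u) ≤ (1 - t) * f v + t * f u :=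
      hf_conv.2 (Set.mem_univ v) (Set.mem_univ u) (by linarith) (le_of_lt ht0) (by ring)
    have hpt : v + t • (u - v) = (1 - t) • v + t • u := by module
    rw [slope_def_field]
    have : φ t ≤ (1 - t) * f v + t * f u := by rw [hφ]; simp only; rw [hpt]; exact hcomb
    have hφ0 : φ 0 = f v := by simp [hφ]
    rw [sub_zero, div_le_iff₀ ht0, hφ0]
    nlinarith
  have := le_of_tendsto hslope hev
  linarith

/-- Descent lemma: smoothness upper bound for functions with Lipschitz gradient. -/
theorem descent_lemma {H : Type*} [NormedAddCommGroup H] [InnerProductSpace ℝ H]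
    [CompleteSpace H] (f : H → ℝ) (f' : H → H) (L : ℝ) (hL : 0 < L)
    (hf_grad : ∀ u, HasGradientAt f (f' u) u)
    (hf_lip : ∀ u v, ‖f' u - f' v‖ ≤ L * ‖u - v‖)
    (v u : H) : f u ≤ f v + ⟪f' v, u - v⟫ + L / 2 * ‖u - v‖ ^ 2 := by
  set d : H := u - v with hd
  set ψ : ℝ → ℝ := fun t => f (v + t • d) - t * ⟪f' v, d⟫ - L * ‖d‖ ^ 2 * t ^ 2 / 2 with hψ
  have hder : ∀ t : ℝ, HasDerivAt ψ
      (⟪f' (v + t • d), d⟫ - ⟪f' v, d⟫ - L * ‖d‖ ^ 2 * t) t := by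
    intro t
    have hc : HasDerivAt (fun t : ℝ => v + t • d) d t := by
      simpa using ((hasDerivAt_id t).smul_const d).const_add v
    have h1 : HasDerivAt (fun t : ℝ => f (v + t • d)) ⟪f' (v + t • d), d⟫ t := by
      have := (hf_grad (v + t • d)).hasFDerivAt.comp_hasDerivAt t hc
      simpa [Function.comp_def] using this
    have h2 : HasDerivAt (fun t : ℝ => t * ⟪f' v, d⟫) ⟪f' v, d⟫ t := by
      simpa using (hasDerivAt_id t).mul_const ⟪f' v, d⟫
    have h3 : HasDerivAt (fun t : ℝ => L * ‖d‖ ^ 2 * t ^ 2 / 2) (L * ‖d‖ ^ 2 * t) t := by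
      have := ((hasDerivAt_pow 2 t).const_mul (L * ‖d‖ ^ 2)).div_const 2
      convert this using 1
      · rfl
      · rfl
      · ring
    exact (h1.sub h2).sub h3
  have hmono : AntitoneOn ψ (Set.Icc 0 1) := by
    apply antitoneOn_of_deriv_nonpos (convex_Icc 0 1)
    · exact (Differentiable.continuous (fun t => (hder t).differentiableAt)).continuousOn
    · intro t _
      exact (hder t).differentiableAt.differentiableWithinAt
    · intro t ht
      rw [interior_Icc] at ht
      rw [(hder t).deriv]
      have hb : ⟪f' (v + t • d) - f' v, d⟫ ≤ L * t * ‖d‖ ^ 2 := by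
        calc ⟪f' (v + t • d) - f' v, d⟫ ≤ ‖f' (v + t • d) - f' v‖ * ‖d‖ :=
              real_inner_le_norm _ _
          _ ≤ L * ‖(v + t • d) - v‖ * ‖d‖ :=
              mul_le_mul_of_nonneg_right (hf_lip _ _) (norm_nonneg d)
          _ = L * (t * ‖d‖) * ‖d‖ := by
              rw [add_sub_cancel_left, norm_smul, Real.norm_eq_abs, abs_of_pos ht.1]
          _ = L * t * ‖d‖ ^ 2 := by ring
      have hexp : ⟪f' (v + t • d) - f' v, d⟫ = ⟪f' (v + t • d), d⟫ - ⟪f' v, d⟫ :=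
        inner_sub_left _ _ _
      nlinarith [hb, hexp]
  have h10 : ψ 1 ≤ ψ 0 := hmono (Set.mem_Icc.2 ⟨le_refl 0, zero_le_one⟩)
    (Set.mem_Icc.2 ⟨zero_le_one, le_refl 1⟩) zero_le_one
  have e1 : v + (1:ℝ) • d = u := by rw [hd]; simp
  have e0 : v + (0:ℝ) • d = v := by simp
  simp only [hψ, e1, e0, one_mul, one_pow, zero_mul, zero_pow, mul_zero] at h10
  nlinarith [h10]

theorem combo_norm_sq {H : Type*} [NormedAddCommGroup H] [InnerProductSpace ℝ H]
    (p u c : H) (t : ℝ) :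
    ‖((1 - t) • p + t • u) - c‖ ^ 2
      = (1 - t) * ‖p - c‖ ^ 2 + t * ‖u - c‖ ^ 2 - t * (1 - t) * ‖u - p‖ ^ 2 := by
  have hv : ((1 - t) • p + t • u) - c = (1 - t) • (p - c) + t • (u - c) := by
    module
  rw [hv]
  have e1 : ‖(1 - t) • (p - c) + t • (u - c)‖ ^ 2
      = (1-t)^2 * ‖p - c‖^2 + 2 * ((1-t)*t*⟪p - c, u - c⟫) + t^2 * ‖u - c‖^2 := by
    rw [norm_add_sq_real, norm_smul, norm_smul, real_inner_smul_left, real_inner_smul_right]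
    rw [mul_pow, mul_pow, Real.norm_eq_abs, Real.norm_eq_abs, sq_abs, sq_abs]
    ring
  have e2 : ‖u - p‖ ^ 2 = ‖u - c‖^2 - 2 * ⟪p - c, u - c⟫ + ‖p - c‖^2 := by
    have : u - p = (u - c) - (p - c) := by abel
    rw [this, norm_sub_sq_real, real_inner_comm]
  rw [e1, e2]; ring

/-- Three point inequality for the minimizer of a strongly convex proximal subproblem. -/
theorem three_point {H : Type*} [NormedAddCommGroup H] [InnerProductSpace ℝ H]
    (h : H → ℝ) (hh_conv : ConvexOn ℝ Set.univ h)
    (g zk p : H) (c : ℝ)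
    (hp : ∀ u : H, h p + ⟪g, p - zk⟫ + c * ‖p - zk‖ ^ 2
        ≤ h u + ⟪g, u - zk⟫ + c * ‖u - zk‖ ^ 2)
    (u : H) :
    h p + ⟪g, p - zk⟫ + c * ‖p - zk‖ ^ 2 + c * ‖u - p‖ ^ 2
      ≤ h u + ⟪g, u - zk⟫ + c * ‖u - zk‖ ^ 2 := by
  have key : ∀ t : ℝ, t ∈ Set.Ioo (0:ℝ) 1 →
      h p + ⟪g, p - zk⟫ + c * ‖p - zk‖ ^ 2 + c * (1 - t) * ‖u - p‖ ^ 2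
        ≤ h u + ⟪g, u - zk⟫ + c * ‖u - zk‖ ^ 2 := by
    intro t ⟨ht0, ht1⟩
    set ut : H := (1 - t) • p + t • u with hut
    have h1 := hp ut
    have h2 : h ut ≤ (1 - t) * h p + t * h u :=
      hh_conv.2 (Set.mem_univ p) (Set.mem_univ u) (by linarith) (le_of_lt ht0) (by ring)
    have h3 : ⟪g, ut - zk⟫ = (1 - t) * ⟪g, p - zk⟫ + t * ⟪g, u - zk⟫ := by
      have hv : ut - zk = (1 - t) • (p - zk) + t • (u - zk) := by
        rw [hut]; module
      rw [hv, inner_add_right, real_inner_smul_right, real_inner_smul_right]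
    have h4 : ‖ut - zk‖ ^ 2
        = (1 - t) * ‖p - zk‖ ^ 2 + t * ‖u - zk‖ ^ 2 - t * (1 - t) * ‖u - p‖ ^ 2 :=
      combo_norm_sq p u zk t
    rw [h3, h4] at h1
    have h5 : t * (h p + ⟪g, p - zk⟫ + c * ‖p - zk‖ ^ 2 + c * (1 - t) * ‖u - p‖ ^ 2)
        ≤ t * (h u + ⟪g, u - zk⟫ + c * ‖u - zk‖ ^ 2) := by nlinarith [h1, h2]
    exact le_of_mul_le_mul_left (by linarith [h5]) ht0
  have htend : Tendsto (fun t : ℝ => h p + ⟪g, p - zk⟫ + c * ‖p - zk‖ ^ 2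
      + c * (1 - t) * ‖u - p‖ ^ 2) (𝓝[>] 0)
      (𝓝 (h p + ⟪g, p - zk⟫ + c * ‖p - zk‖ ^ 2 + c * (1 - 0) * ‖u - p‖ ^ 2)) := by
    apply Tendsto.mono_left _ nhdsWithin_le_nhds
    exact (Continuous.tendsto (by continuity) 0)
  have hev : ∀ᶠ t in 𝓝[>] (0:ℝ), (h p + ⟪g, p - zk⟫ + c * ‖p - zk‖ ^ 2
      + c * (1 - t) * ‖u - p‖ ^ 2) ≤ h u + ⟪g, u - zk⟫ + c * ‖u - zk‖ ^ 2 := by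
    filter_upwards [Ioo_mem_nhdsGT_of_mem (Set.mem_Ico.2 ⟨le_refl (0:ℝ), one_pos⟩)]
      with t ht using key t ht
  have := le_of_tendsto htend hev
  simpa using this

/-! ### Coefficient combinatorics -/

/-- coefficient of `z (m+1) - z m` in the expansion of `x k`. -/
noncomputable def aagdC (m k : ℕ) : ℝ :=
  1 - ((m:ℝ) * ((m:ℝ)+1)) / ((k:ℝ) * ((k:ℝ)+1))

lemma aagdC_zero (k : ℕ) : aagdC 0 k = 1 := by unfold aagdC; simp

lemma aagdC_coef_id (m k : ℕ) (hm : m < k) :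
    2/((k:ℝ)+2) + (1 - 2/((k:ℝ)+2)) * aagdC m k = aagdC m (k+1) := by
  have hk : (1:ℝ) ≤ (k:ℝ) := by exact_mod_cast Nat.one_le_iff_ne_zero.2 (by omega)
  unfold aagdC
  have h0 : ((k:ℝ)) ≠ 0 := by linarith
  have h1 : ((k:ℝ)) + 1 ≠ 0 := by linarith
  have h2 : ((k:ℝ)) + 2 ≠ 0 := by linarith
  push_cast
  field_simp
  ring

lemma aagdC_diag (k : ℕ) : (2:ℝ)/((k:ℝ)+2) = aagdC k (k+1) := by
  unfold aagdC
  have h1 : ((k:ℝ)) + 1 ≠ 0 := by positivity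
  have h2 : ((k:ℝ)) + 2 ≠ 0 := by positivity
  push_cast
  field_simp
  ring

lemma aagdC_self (k : ℕ) (hk : 1 ≤ k) : aagdC k k = 0 := by
  unfold aagdC
  have h0 : ((k:ℝ)) ≠ 0 := by
    exact (Nat.cast_pos.2 (by omega : 0 < k)).ne'
  have h1 : ((k:ℝ)) + 1 ≠ 0 := by positivity
  field_simp
  simp

lemma aagdC_w_coef (m J' k : ℕ) (hJk : J' + 2 ≤ k) :
    aagdC m (J'+2)
      + (((J':ℝ)+1)/2 - (((J':ℝ)+1)*((J':ℝ)+2)*((J':ℝ)+3))/(2*((k:ℝ)+1)*((k:ℝ)+2)))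
        * (aagdC m (J'+2) - aagdC m (J'+1))
    = aagdC m (k+1) := by
  unfold aagdC
  have hk' : (2:ℝ) ≤ (k:ℝ) := by exact_mod_cast by omega
  have h1 : ((J':ℝ)) + 1 ≠ 0 := by positivity
  have h2 : ((J':ℝ)) + 2 ≠ 0 := by positivity
  have h3 : ((J':ℝ)) + 3 ≠ 0 := by positivity
  have hk1 : ((k:ℝ)) + 1 ≠ 0 := by linarith
  have hk2 : ((k:ℝ)) + 2 ≠ 0 := by linarith
  push_cast
  field_simp
  ring

lemma aagdC_bound (m k τ : ℕ) (hmk : m < k) (hkm : k ≤ m + τ) :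
    |aagdC m (k+1)| ≤ ((τ:ℝ)+1) * (2/((k:ℝ)+2)) := by
  have hcast : aagdC m (k+1)
      = 1 - ((m:ℝ)*((m:ℝ)+1)) / (((k:ℝ)+1)*((k:ℝ)+2)) := by
    unfold aagdC; push_cast; ring_nf
  have hm1 : (m:ℝ) + 1 ≤ (k:ℝ) := by exact_mod_cast hmk
  have hk1 : (k:ℝ) ≤ (m:ℝ) + (τ:ℝ) := by exact_mod_cast hkm
  have hm0 : (0:ℝ) ≤ (m:ℝ) := Nat.cast_nonneg m
  have hpos : (0:ℝ) < ((k:ℝ)+1)*((k:ℝ)+2) := by positivity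
  have hnn : 0 ≤ aagdC m (k+1) := by
    rw [hcast, sub_nonneg, div_le_one hpos]
    nlinarith
  rw [abs_of_nonneg hnn, hcast]
  have expand : ((τ:ℝ)+1) * (2/((k:ℝ)+2))
      = (2*((τ:ℝ)+1)*((k:ℝ)+1)) / (((k:ℝ)+1)*((k:ℝ)+2)) := by
    field_simp
  have e2 : 1 - ((m:ℝ)*((m:ℝ)+1)) / (((k:ℝ)+1)*((k:ℝ)+2))
      = (((k:ℝ)+1)*((k:ℝ)+2) - (m:ℝ)*((m:ℝ)+1)) / (((k:ℝ)+1)*((k:ℝ)+2)) := by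
    field_simp
  rw [expand, e2, div_le_div_iff₀ hpos hpos]
  have key : ((k:ℝ)+1)*((k:ℝ)+2) - (m:ℝ)*((m:ℝ)+1) ≤ 2*((τ:ℝ)+1)*((k:ℝ)+1) := by
    have h1 : (k:ℝ) - m + 1 ≤ (τ:ℝ) + 1 := by linarith
    have h2 : (k:ℝ) + m + 2 ≤ 2*((k:ℝ)+1) := by linarith
    nlinarith [mul_le_mul h1 h2 (by linarith) (by positivity)]
  nlinarith [key, hpos]

lemma sum_Ico_window_le (t : ℕ → ℝ) (ht : ∀ m, 0 ≤ t m) (τ N : ℕ) :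
    ∑ k ∈ range N, ∑ m ∈ Ico (k - τ) k, t m ≤ (τ:ℝ) * ∑ m ∈ range N, t m := by
  have h1 : ∀ k ∈ range N, ∑ m ∈ Ico (k - τ) k, t m
      = ∑ m ∈ range N, if m ∈ Ico (k - τ) k then t m else 0 := by
    intro k hk
    rw [Finset.sum_ite_mem]
    congr 1
    refine (Finset.inter_eq_right.2 ?_).symm
    intro m hm
    exact Finset.mem_range.2 (lt_trans (Finset.mem_Ico.1 hm).2 (Finset.mem_range.1 hk))
  rw [Finset.sum_congr rfl h1, Finset.sum_comm, Finset.mul_sum]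
  apply Finset.sum_le_sum
  intro m _
  rw [← Finset.sum_filter, Finset.sum_const, nsmul_eq_mul]
  have hsub : (range N).filter (fun k => m ∈ Ico (k - τ) k) ⊆ Ico (m+1) (m+1+τ) := by
    intro k hk
    have h := Finset.mem_filter.1 hk
    have h2 := Finset.mem_Ico.1 h.2
    exact Finset.mem_Ico.2 (by omega)
  have hcard : ((range N).filter (fun k => m ∈ Ico (k - τ) k)).card ≤ τ := by
    have := Finset.card_le_card hsub
    rwa [Nat.card_Ico, Nat.add_sub_cancel_left] at this
  exact mul_le_mul_of_nonneg_right (by exact_mod_cast hcard) (ht m)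

/-! ### Closed forms for the iterates -/

section CF
variable {H : Type*} [NormedAddCommGroup H] [InnerProductSpace ℝ H]
variable (θ : ℕ → ℝ) (x z : ℕ → H)
variable (hθ : ∀ k, θ k = 2 / ((k : ℝ) + 2))
variable (hx0 : x 0 = z 0)
variable (hx : ∀ k, x (k + 1) = θ k • z (k + 1) + (1 - θ k) • x k)

include hθ hx0 hx

theorem aagd_xcf : ∀ k, x k = x 0 + ∑ m ∈ range k, aagdC m k • (z (m+1) - z m) := by
  intro k
  induction k with
  | zero => simp
  | succ k ih =>
    have hzcf : z (k+1) = x 0 + ∑ m ∈ range (k+1), (z (m+1) - z m) := by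
      rw [Finset.sum_range_sub (fun m => z m), hx0]; abel
    rw [hx k, ih, hzcf]
    rw [Finset.sum_range_succ, Finset.sum_range_succ]
    have key : ∑ m ∈ range k, (θ k • (z (m+1) - z m)
          + (1 - θ k) • (aagdC m k • (z (m+1) - z m)))
        = ∑ m ∈ range k, aagdC m (k+1) • (z (m+1) - z m) := by
      apply Finset.sum_congr rfl
      intro m hm
      rw [smul_smul, ← add_smul]
      congr 1
      rw [hθ]
      exact aagdC_coef_id m k (Finset.mem_range.1 hm)
    have hlast : θ k • (z (k+1) - z k) = aagdC k (k+1) • (z (k+1) - z k) := by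
      rw [hθ, aagdC_diag]
    rw [← key, ← hlast]
    rw [Finset.sum_add_distrib, ← Finset.smul_sum, ← Finset.smul_sum]
    module

theorem aagd_ycf (y : ℕ → H) (hy : ∀ k, y k = (1 - θ k) • x k + θ k • z k) :
    ∀ k, y k = x 0 + ∑ m ∈ range k, aagdC m (k+1) • (z (m+1) - z m) := by
  intro k
  have hx1 : x (k+1) = x 0 + ∑ m ∈ range (k+1), aagdC m (k+1) • (z (m+1) - z m) :=
    aagd_xcf θ x z hθ hx0 hx (k+1)
  have h2 : y k = x (k+1) - θ k • (z (k+1) - z k) := by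
    rw [hy k, hx k]; module
  rw [h2, hx1, Finset.sum_range_succ, hθ, aagdC_diag]
  module
end CF

section ABS
variable (θ a : ℕ → ℝ) (b : ℕ → ℕ → ℝ)
variable (hθ : ∀ k, θ k = 2 / ((k : ℝ) + 2))
variable (ha : ∀ k, 1 ≤ k → a k = θ k * (1 - θ (k - 1)) / θ (k - 1))
variable (hb : ∀ l k, b l k = ∏ i ∈ Finset.Icc l k, a i)

include hθ ha in
lemma aagd_acf : ∀ i : ℕ, a (i+1) = (i:ℝ)/((i:ℝ)+3) := by
  intro i
  have h := ha (i+1) (by omega)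
  rw [Nat.add_sub_cancel] at h
  rw [h, hθ, hθ]
  have h2 : ((i:ℝ)) + 2 ≠ 0 := by positivity
  have h3 : ((i:ℝ)) + 3 ≠ 0 := by positivity
  push_cast
  field_simp
  ring

include hθ ha hb in
lemma aagd_bcf : ∀ J' i : ℕ, J' + 2 ≤ i →
    b (J'+2) i = (((J':ℝ)+1)*((J':ℝ)+2)*((J':ℝ)+3))
      / ((i:ℝ)*((i:ℝ)+1)*((i:ℝ)+2)) := by
  intro J'
  refine Nat.le_induction ?_ ?_
  · rw [hb, Finset.Icc_self, Finset.prod_singleton,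
      show J' + 2 = (J'+1) + 1 from rfl, aagd_acf θ a hθ ha]
    have h2 : ((J':ℝ)) + 2 ≠ 0 := by positivity
    have h3 : ((J':ℝ)) + 3 ≠ 0 := by positivity
    have h4 : ((J':ℝ)) + 4 ≠ 0 := by positivity
    push_cast
    field_simp
    ring
  · intro i hi ih
    have hstep : b (J'+2) (i+1) = b (J'+2) i * a (i+1) := by
      rw [hb, hb, Finset.prod_Icc_succ_top (by omega : J' + 2 ≤ i + 1)]
    rw [hstep, ih, aagd_acf θ a hθ ha]
    have hi' : (2:ℝ) ≤ (i:ℝ) := by exact_mod_cast by omega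
    have h0 : ((i:ℝ)) ≠ 0 := by linarith
    have h1 : ((i:ℝ)) + 1 ≠ 0 := by linarith
    have h2 : ((i:ℝ)) + 2 ≠ 0 := by linarith
    have h3 : ((i:ℝ)) + 3 ≠ 0 := by linarith
    push_cast
    field_simp
    ring

include hθ ha hb in
lemma aagd_Scf : ∀ J' k : ℕ, J' + 2 ≤ k →
    ∑ i ∈ Finset.Icc (J'+2) k, b (J'+2) i
      = ((J':ℝ)+1)/2 - (((J':ℝ)+1)*((J':ℝ)+2)*((J':ℝ)+3))
          / (2*((k:ℝ)+1)*((k:ℝ)+2)) := by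
  intro J'
  refine Nat.le_induction ?_ ?_
  · rw [Finset.Icc_self, Finset.sum_singleton, aagd_bcf θ a b hθ ha hb _ _ le_rfl]
    have h2 : ((J':ℝ)) + 2 ≠ 0 := by positivity
    have h3 : ((J':ℝ)) + 3 ≠ 0 := by positivity
    have h4 : ((J':ℝ)) + 4 ≠ 0 := by positivity
    push_cast
    field_simp
    ring
  · intro k hk ih
    rw [Finset.sum_Icc_succ_top (by omega : J' + 2 ≤ k + 1), ih,
      aagd_bcf θ a b hθ ha hb _ _ (by omega)]
    have hk' : (2:ℝ) ≤ (k:ℝ) := by exact_mod_cast by omega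
    have h1 : ((k:ℝ)) + 1 ≠ 0 := by linarith
    have h2 : ((k:ℝ)) + 2 ≠ 0 := by linarith
    have h3 : ((k:ℝ)) + 3 ≠ 0 := by linarith
    push_cast
    field_simp
    ring
end ABS

section W
variable {H : Type*} [NormedAddCommGroup H] [InnerProductSpace ℝ H]
variable (θ a : ℕ → ℝ) (b : ℕ → ℕ → ℝ) (x z w : ℕ → H) (j : ℕ → ℕ)
variable (hθ : ∀ k, θ k = 2 / ((k : ℝ) + 2))
variable (ha : ∀ k, 1 ≤ k → a k = θ k * (1 - θ (k - 1)) / θ (k - 1))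
variable (hb : ∀ l k, b l k = ∏ i ∈ Finset.Icc l k, a i)
variable (xcf : ∀ k, x k = x 0 + ∑ m ∈ range k, aagdC m k • (z (m+1) - z m))
variable (Scf : ∀ J' k : ℕ, J' + 2 ≤ k →
    ∑ i ∈ Finset.Icc (J'+2) k, b (J'+2) i
      = ((J':ℝ)+1)/2 - (((J':ℝ)+1)*((J':ℝ)+2)*((J':ℝ)+3))
          / (2*((k:ℝ)+1)*((k:ℝ)+2)))

include hθ ha hb xcf Scf in
theorem aagd_wcf
    (hjle : ∀ k, j k ≤ k)
    (hw : ∀ k, w k = x (j k)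
        + (∑ i ∈ Finset.Icc (j k) k, b (j k) i) • (x (j k) - x (j k - 1))) :
    ∀ k, w k = x 0 + ∑ m ∈ range (j k), aagdC m (k+1) • (z (m+1) - z m) := by
  intro k
  rcases hJ : j k with _ | J1
  · rw [hw k, hJ]
    simp
  · rcases J1 with _ | J'
    · -- j k = 1
      have ha1 : a 1 = 0 := by
        have := ha 1 le_rfl
        rw [hθ, hθ] at this
        norm_num at this
        exact this
      have hS : ∑ i ∈ Finset.Icc 1 k, b 1 i = 0 := by
        apply Finset.sum_eq_zero
        intro i hi
        rw [hb]
        exact Finset.prod_eq_zero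
          (Finset.mem_Icc.2 ⟨le_rfl, (Finset.mem_Icc.1 hi).1⟩) ha1
      rw [hw k, hJ, hS, zero_smul, add_zero, xcf 1]
      rw [Finset.sum_range_one, Finset.sum_range_one, aagdC_zero, aagdC_zero]
    · -- j k = J' + 2
      have hJk : J' + 2 ≤ k := hJ ▸ hjle k
      simp only [show J' + 1 + 1 = J' + 2 from rfl] at hJ ⊢
      have hext : ∑ m ∈ range (J'+2), aagdC m (J'+1) • (z (m+1) - z m)
          = ∑ m ∈ range (J'+1), aagdC m (J'+1) • (z (m+1) - z m) := by
        rw [Finset.sum_range_succ, aagdC_self (J'+1) (by omega), zero_smul, add_zero]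
      have hd : x (J'+2) - x (J'+1)
          = ∑ m ∈ range (J'+2), (aagdC m (J'+2) - aagdC m (J'+1)) • (z (m+1) - z m) := by
        rw [xcf (J'+2), xcf (J'+1), ← hext, add_sub_add_left_eq_sub,
          ← Finset.sum_sub_distrib]
        exact Finset.sum_congr rfl (fun m _ => (sub_smul _ _ _).symm)
      have hsub1 : (J' + 2) - 1 = J' + 1 := rfl
      rw [hw k, hJ, hsub1, Scf J' k hJk, hd, xcf (J'+2), Finset.smul_sum, add_assoc,
        ← Finset.sum_add_distrib]
      congr 1
      apply Finset.sum_congr rfl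
      intro m _
      rw [smul_smul, ← add_smul, aagdC_w_coef m J' k hJk]
end W

/-! ### The per-iteration estimate -/

set_option maxHeartbeats 1000000 in
theorem aagd_step {H : Type*} [NormedAddCommGroup H] [InnerProductSpace ℝ H]
    (f h : H → ℝ) (f' : H → H) (L γ θ : ℝ)
    (hL : 0 < L) (hγ : 0 < γ) (hθpos : 0 < θ) (hθ1 : θ ≤ 1)
    (hh_conv : ConvexOn ℝ Set.univ h)
    (hdesc : ∀ u v : H, f u ≤ f v + ⟪f' v, u - v⟫ + L / 2 * ‖u - v‖ ^ 2)
    (hcg : ∀ v u : H, f v + ⟪f' v, u - v⟫ ≤ f u)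
    (xstar xk xk1 zk zk1 yk wk : H)
    (hyk : yk = (1 - θ) • xk + θ • zk)
    (hxk1 : xk1 = θ • zk1 + (1 - θ) • xk)
    (htp : h zk1 + ⟪f' wk, zk1 - zk⟫ + θ/(2*γ)*‖zk1 - zk‖^2 + θ/(2*γ)*‖xstar - zk1‖^2
        ≤ h xstar + ⟪f' wk, xstar - zk⟫ + θ/(2*γ)*‖xstar - zk‖^2) :
    f xk1 + h xk1 ≤ θ*(f xstar + h xstar) + (1-θ)*(f xk + h xk)
      + θ^2/(2*γ)*(‖xstar - zk‖^2 - ‖xstar - zk1‖^2)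
      + (L - 1/(2*γ))*θ^2*‖zk1 - zk‖^2 + L*‖yk - wk‖^2 := by
  have A1 := hdesc xk1 wk
  have hvec : xk1 - wk = θ • (zk1 - zk) + (yk - wk) := by
    rw [hxk1, hyk]; module
  have A2 : ⟪f' wk, xk1 - wk⟫ = θ * ⟪f' wk, zk1 - zk⟫ + ⟪f' wk, yk - wk⟫ := by
    rw [hvec, inner_add_right, real_inner_smul_right]
  have A3 : ‖xk1 - wk‖^2 ≤ 2*θ^2*‖zk1 - zk‖^2 + 2*‖yk - wk‖^2 := by
    rw [hvec]
    have h1 := norm_add_le (θ • (zk1 - zk)) (yk - wk)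
    have h2 : ‖θ • (zk1 - zk)‖ = θ * ‖zk1 - zk‖ := by
      rw [norm_smul, Real.norm_eq_abs, abs_of_pos hθpos]
    rw [h2] at h1
    nlinarith [norm_nonneg (θ • (zk1 - zk) + (yk - wk)), norm_nonneg (zk1 - zk),
      norm_nonneg (yk - wk), sq_nonneg (θ*‖zk1 - zk‖ - ‖yk - wk‖)]
  have A4 : θ • (xstar - zk) = θ • (xstar - wk) + (1-θ) • (xk - wk) - (yk - wk) := by
    rw [hyk]; module
  have A4' : θ * ⟪f' wk, xstar - zk⟫
      = θ * ⟪f' wk, xstar - wk⟫ + (1-θ) * ⟪f' wk, xk - wk⟫ - ⟪f' wk, yk - wk⟫ := by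
    conv_lhs => rw [← real_inner_smul_right]
    rw [A4, inner_sub_right, inner_add_right, real_inner_smul_right,
      real_inner_smul_right]
  have B5a : θ * ⟪f' wk, xstar - wk⟫ ≤ θ * (f xstar - f wk) :=
    mul_le_mul_of_nonneg_left (by linarith [hcg wk xstar]) hθpos.le
  have B5b : (1-θ) * ⟪f' wk, xk - wk⟫ ≤ (1-θ) * (f xk - f wk) :=
    mul_le_mul_of_nonneg_left (by linarith [hcg wk xk]) (by linarith)
  have A6 : h xk1 ≤ θ * h zk1 + (1 - θ) * h xk := by
    rw [hxk1]
    exact hh_conv.2 (Set.mem_univ _) (Set.mem_univ _) hθpos.le (by linarith) (by ring)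
  have B3 := mul_le_mul_of_nonneg_left htp hθpos.le
  have B1 := mul_le_mul_of_nonneg_left A3 (by positivity : (0:ℝ) ≤ L/2)
  have hγ' : γ ≠ 0 := ne_of_gt hγ
  ring_nf at A1 A2 A4' B5a B5b A6 B3 B1 ⊢
  linarith [A1, A2, A4', B5a, B5b, A6, B3, B1]

/-! ### Main theorem -/

set_option maxHeartbeats 2000000 in
/-- AAGD (Accelerated Asynchronous Gradient Descent) with momentum compensation,
non-strongly convex case: with `θ^k = 2/(k+2)`, step size satisfying
`2γL + 3γL(τ²+3τ)² ≤ 1`, and serial first `τ` iterations, one has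
`F(x^{K+1}) − F(x^*) ≤ (θ^K)² (1/(2γ)) ‖z^0 − x^*‖²`. -/
theorem aagd_nonstrongly_convex
    {H : Type*} [NormedAddCommGroup H] [InnerProductSpace ℝ H] [CompleteSpace H]
    (f h : H → ℝ) (f' : H → H) (L : ℝ) (hL : 0 < L)
    (hf_conv : ConvexOn ℝ Set.univ f)
    (hf_grad : ∀ u, HasGradientAt f (f' u) u)
    (hf_lip : ∀ u v, ‖f' u - f' v‖ ≤ L * ‖u - v‖)
    (hh_conv : ConvexOn ℝ Set.univ h)
    (xstar : H) (hmin : ∀ u, f xstar + h xstar ≤ f u + h u)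
    (γ : ℝ) (hγ : 0 < γ)
    (τ : ℕ) (hτ : 1 ≤ τ)
    (j : ℕ → ℕ) (hj : ∀ k, k - τ ≤ j k ∧ j k ≤ k)
    (θ a : ℕ → ℝ) (b : ℕ → ℕ → ℝ)
    (hθ : ∀ k, θ k = 2 / ((k : ℝ) + 2))
    (hθ_range : ∀ k, 0 < θ k ∧ θ k ≤ 1)
    (ha0 : a 0 = 0)
    (ha : ∀ k, 1 ≤ k → a k = θ k * (1 - θ (k - 1)) / θ (k - 1))
    (hb : ∀ l k, b l k = ∏ i ∈ Finset.Icc l k, a i)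
    (x z y w : ℕ → H)
    (hx0 : x 0 = z 0)
    (hy : ∀ k, y k = (1 - θ k) • x k + θ k • z k)
    (hw : ∀ k, w k = x (j k)
        + (∑ i ∈ Finset.Icc (j k) k, b (j k) i) • (x (j k) - x (j k - 1)))
    (hz : ∀ k, ∀ u : H,
      h (z (k + 1)) + ⟪f' (w k), z (k + 1) - z k⟫
          + θ k / (2 * γ) * ‖z (k + 1) - z k‖ ^ 2
        ≤ h u + ⟪f' (w k), u - z k⟫ + θ k / (2 * γ) * ‖u - z k‖ ^ 2)
    (hx : ∀ k, x (k + 1) = θ k • z (k + 1) + (1 - θ k) • x k)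
    (hserial : ∀ k, k < τ → j k = k)
    (hstep : 2 * γ * L + 3 * γ * L * ((τ : ℝ) ^ 2 + 3 * τ) ^ 2 ≤ 1) :
    ∀ K : ℕ, (f (x (K + 1)) + h (x (K + 1))) - (f xstar + h xstar)
      ≤ (θ K) ^ 2 * (1 / (2 * γ) * ‖z 0 - xstar‖ ^ 2) := by
  have hθpos : ∀ k, 0 < θ k := fun k => (hθ_range k).1
  have hjle : ∀ k, j k ≤ k := fun k => (hj k).2
  have hdesc : ∀ u v : H, f u ≤ f v + ⟪f' v, u - v⟫ + L / 2 * ‖u - v‖ ^ 2 :=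
    fun u v => descent_lemma f f' L hL hf_grad hf_lip v u
  have hcg : ∀ v u : H, f v + ⟪f' v, u - v⟫ ≤ f u :=
    fun v u => convex_grad_ineq f f' hf_conv hf_grad v u
  have xcf := aagd_xcf θ x z hθ hx0 hx
  have ycf := aagd_ycf θ x z hθ hx0 hx y hy
  have Scf := aagd_Scf θ a b hθ ha hb
  have wcf := aagd_wcf θ a b x z w j hθ ha hb xcf Scf hjle hw
  -- three-point inequality at xstar
  have htp : ∀ k, h (z (k+1)) + ⟪f' (w k), z (k+1) - z k⟫
      + θ k/(2*γ)*‖z (k+1) - z k‖^2 + θ k/(2*γ)*‖xstar - z (k+1)‖^2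
      ≤ h xstar + ⟪f' (w k), xstar - z k⟫ + θ k/(2*γ)*‖xstar - z k‖^2 := by
    intro k
    have h3 := three_point h hh_conv (f' (w k)) (z k) (z (k+1)) (θ k/(2*γ))
      (fun u => hz k u) xstar
    linarith [h3]
  -- per-step estimate
  have step : ∀ k, f (x (k+1)) + h (x (k+1)) ≤ θ k*(f xstar + h xstar)
      + (1-θ k)*(f (x k) + h (x k))
      + (θ k)^2/(2*γ)*(‖xstar - z k‖^2 - ‖xstar - z (k+1)‖^2)
      + (L - 1/(2*γ))*(θ k)^2*‖z (k+1) - z k‖^2 + L*‖y k - w k‖^2 :=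
    fun k => aagd_step f h f' L γ (θ k) hL hγ (hθpos k) (hθ_range k).2 hh_conv hdesc hcg
      xstar (x k) (x (k+1)) (z k) (z (k+1)) (y k) (w k) (hy k) (hx k) (htp k)
  -- bound on the momentum-compensation error
  have Ebound : ∀ k, ‖y k - w k‖
      ≤ ((τ:ℝ)+1) * θ k * ∑ m ∈ Finset.Ico (k-τ) k, ‖z (m+1) - z m‖ := by
    intro k
    have hsplit := Finset.sum_Ico_consecutive
      (f := fun m => aagdC m (k+1) • (z (m+1) - z m)) (Nat.zero_le (j k)) (hjle k)
    have hE : y k - w k = ∑ m ∈ Finset.Ico (j k) k, aagdC m (k+1) • (z (m+1) - z m) := by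
      rw [ycf k, wcf k, add_sub_add_left_eq_sub, Finset.range_eq_Ico,
        ← hsplit, Finset.range_eq_Ico, add_sub_cancel_left]
    rw [hE]
    calc ‖∑ m ∈ Finset.Ico (j k) k, aagdC m (k+1) • (z (m+1) - z m)‖
        ≤ ∑ m ∈ Finset.Ico (j k) k, ‖aagdC m (k+1) • (z (m+1) - z m)‖ :=
          norm_sum_le _ _
      _ ≤ ∑ m ∈ Finset.Ico (j k) k, ((τ:ℝ)+1) * θ k * ‖z (m+1) - z m‖ := by
          apply Finset.sum_le_sum
          intro m hm
          obtain ⟨hm1, hm2⟩ := Finset.mem_Ico.1 hm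
          have hkm : k ≤ m + τ := by have := (hj k).1; omega
          rw [norm_smul, Real.norm_eq_abs]
          apply mul_le_mul_of_nonneg_right _ (norm_nonneg _)
          rw [hθ]
          exact aagdC_bound m k τ hm2 hkm
      _ ≤ ∑ m ∈ Finset.Ico (k-τ) k, ((τ:ℝ)+1) * θ k * ‖z (m+1) - z m‖ := by
          apply Finset.sum_le_sum_of_subset_of_nonneg
            (Finset.Ico_subset_Ico (hj k).1 le_rfl)
          intro i _ _
          have := hθpos k
          positivity
      _ = ((τ:ℝ)+1) * θ k * ∑ m ∈ Finset.Ico (k-τ) k, ‖z (m+1) - z m‖ := by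
          rw [Finset.mul_sum]
  -- squared error bound
  have Esq : ∀ k, L*‖y k - w k‖^2
      ≤ (θ k)^2 * (L*((τ:ℝ)+1)^2*(τ:ℝ) * ∑ m ∈ Finset.Ico (k-τ) k, ‖z (m+1) - z m‖^2) := by
    intro k
    have s1 : ‖y k - w k‖^2
        ≤ (((τ:ℝ)+1) * θ k * ∑ m ∈ Finset.Ico (k-τ) k, ‖z (m+1) - z m‖)^2 :=
      pow_le_pow_left₀ (norm_nonneg _) (Ebound k) 2
    have s2 : (∑ m ∈ Finset.Ico (k-τ) k, ‖z (m+1) - z m‖)^2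
        ≤ (τ:ℝ) * ∑ m ∈ Finset.Ico (k-τ) k, ‖z (m+1) - z m‖^2 := by
      have cs := sq_sum_le_card_mul_sum_sq
        (s := Finset.Ico (k-τ) k) (f := fun m => ‖z (m+1) - z m‖)
      have hcard : ((Finset.Ico (k-τ) k).card : ℝ) ≤ (τ:ℝ) := by
        rw [Nat.card_Ico]
        exact_mod_cast (by omega : k - (k - τ) ≤ τ)
      have hsnn : 0 ≤ ∑ m ∈ Finset.Ico (k-τ) k, ‖z (m+1) - z m‖^2 :=
        Finset.sum_nonneg (fun i _ => by positivity)
      calc (∑ m ∈ Finset.Ico (k-τ) k, ‖z (m+1) - z m‖)^2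
          ≤ ((Finset.Ico (k-τ) k).card : ℝ)
            * ∑ m ∈ Finset.Ico (k-τ) k, ‖z (m+1) - z m‖^2 := cs
        _ ≤ (τ:ℝ) * ∑ m ∈ Finset.Ico (k-τ) k, ‖z (m+1) - z m‖^2 :=
            mul_le_mul_of_nonneg_right hcard hsnn
    have s3 := mul_le_mul_of_nonneg_left s2
      (mul_nonneg (mul_nonneg hL.le (sq_nonneg ((τ:ℝ)+1))) (sq_nonneg (θ k)))
    have s4 := mul_le_mul_of_nonneg_left s1 hL.le
    ring_nf at s3 s4 ⊢
    linarith [s3, s4]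
  -- the per-step correction term
  set c : ℕ → ℝ := fun k => (L - 1/(2*γ))*‖z (k+1) - z k‖^2
    + L*((τ:ℝ)+1)^2*(τ:ℝ) * ∑ m ∈ Finset.Ico (k-τ) k, ‖z (m+1) - z m‖^2 with hcdef
  have step' : ∀ k, f (x (k+1)) + h (x (k+1)) - (f xstar + h xstar)
      ≤ (1-θ k)*(f (x k) + h (x k) - (f xstar + h xstar))
      + (θ k)^2/(2*γ)*(‖xstar - z k‖^2 - ‖xstar - z (k+1)‖^2)
      + (θ k)^2 * c k := by
    intro k
    have h1 := step k
    have h2 := Esq k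
    simp only [hcdef]
    ring_nf at h1 h2 ⊢
    linarith [h1, h2]
  -- telescoped estimate, by induction
  have P : ∀ K, (f (x (K+1)) + h (x (K+1)) - (f xstar + h xstar))
      + (θ K)^2 * (‖xstar - z (K+1)‖^2/(2*γ))
      ≤ (θ K)^2 * (‖xstar - z 0‖^2/(2*γ) + ∑ k ∈ range (K+1), c k) := by
    intro K
    induction K with
    | zero =>
      have h1 := step' 0
      have hθ0 : θ 0 = 1 := by rw [hθ]; norm_num
      rw [hθ0] at h1 ⊢
      rw [Finset.sum_range_one]
      ring_nf at h1 ⊢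
      linarith [h1]
    | succ K ih =>
      have hK2 : (0:ℝ) < (θ K)^2 := pow_pos (hθpos K) 2
      have hFnn : 0 ≤ f (x (K+1)) + h (x (K+1)) - (f xstar + h xstar) := by
        linarith [hmin (x (K+1))]
      have hρ : (1 - θ (K+1)) ≤ (θ (K+1))^2/(θ K)^2 := by
        rw [le_div_iff₀ hK2, hθ, hθ]
        have hXY : ((K+1:ℕ):ℝ) + 2 = ((K:ℝ)+2)+1 := by push_cast; ring
        rw [hXY]
        have hs : (0:ℝ) < (K:ℝ)+2 := by positivity
        have hs1 : (0:ℝ) < (K:ℝ)+2+1 := by positivity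
        have l1 : (1 - 2/(((K:ℝ)+2)+1)) * (2/((K:ℝ)+2))^2
            = (4*((K:ℝ)+1)) / ((((K:ℝ)+2)+1)*((K:ℝ)+2)^2) := by
          field_simp
          ring
        have l2 : (2/(((K:ℝ)+2)+1))^2 = 4 / ((((K:ℝ)+2)+1)^2) := by
          rw [div_pow]; norm_num
        rw [l1, l2, div_le_div_iff₀ (by positivity) (by positivity)]
        nlinarith [hs, hs1]
      have m1 := mul_le_mul_of_nonneg_right hρ hFnn
      have m2 := mul_le_mul_of_nonneg_left
        (by linarith [ih] :
          f (x (K+1)) + h (x (K+1)) - (f xstar + h xstar)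
            ≤ (θ K)^2 * (‖xstar - z 0‖^2/(2*γ) + ∑ k ∈ range (K+1), c k)
              - (θ K)^2 * (‖xstar - z (K+1)‖^2/(2*γ)))
        (by positivity : (0:ℝ) ≤ (θ (K+1))^2/(θ K)^2)
      have m3 : (θ (K+1))^2/(θ K)^2
          * ((θ K)^2 * (‖xstar - z 0‖^2/(2*γ) + ∑ k ∈ range (K+1), c k)
            - (θ K)^2 * (‖xstar - z (K+1)‖^2/(2*γ)))
          = (θ (K+1))^2 * (‖xstar - z 0‖^2/(2*γ) + ∑ k ∈ range (K+1), c k)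
            - (θ (K+1))^2 * (‖xstar - z (K+1)‖^2/(2*γ)) := by
        have hcan : (θ (K+1))^2/(θ K)^2 * (θ K)^2 = (θ (K+1))^2 :=
          div_mul_cancel₀ _ (ne_of_gt hK2)
        calc (θ (K+1))^2/(θ K)^2
            * ((θ K)^2 * (‖xstar - z 0‖^2/(2*γ) + ∑ k ∈ range (K+1), c k)
              - (θ K)^2 * (‖xstar - z (K+1)‖^2/(2*γ)))
            = ((θ (K+1))^2/(θ K)^2 * (θ K)^2)
                * (‖xstar - z 0‖^2/(2*γ) + ∑ k ∈ range (K+1), c k)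
              - ((θ (K+1))^2/(θ K)^2 * (θ K)^2)
                * (‖xstar - z (K+1)‖^2/(2*γ)) := by ring
          _ = _ := by rw [hcan]
      have h1 := step' (K+1)
      rw [Finset.sum_range_succ]
      ring_nf at h1 m1 m2 m3 ⊢
      linarith [h1, m1, m2, m3]
  intro K
  -- sum of correction terms is nonpositive
  have hτR : (0:ℝ) ≤ (τ:ℝ) := Nat.cast_nonneg τ
  have hkey : L + L*(τ:ℝ)^2*((τ:ℝ)+1)^2 ≤ 1/(2*γ) := by
    have h1 : (2:ℝ)*(τ:ℝ)^2*((τ:ℝ)+1)^2 ≤ 3*((τ:ℝ)^2+3*(τ:ℝ))^2 := by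
      nlinarith [sq_nonneg (τ:ℝ), hτR]
    have h2 : (0:ℝ) ≤ γ*L := by positivity
    have h3 : 2*γ*L + 2*γ*L*((τ:ℝ)^2*((τ:ℝ)+1)^2) ≤ 1 := by nlinarith [h1, h2, hstep]
    rw [le_div_iff₀ (by positivity : (0:ℝ) < 2*γ)]
    nlinarith [h3]
  have hCsum : ∑ k ∈ range (K+1), c k ≤ 0 := by
    have hsplit : ∑ k ∈ range (K+1), c k
        = (L - 1/(2*γ)) * ∑ k ∈ range (K+1), ‖z (k+1) - z k‖^2
          + L*((τ:ℝ)+1)^2*(τ:ℝ)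
            * ∑ k ∈ range (K+1), ∑ m ∈ Finset.Ico (k-τ) k, ‖z (m+1) - z m‖^2 := by
      simp only [hcdef]
      rw [Finset.sum_add_distrib, Finset.mul_sum, Finset.mul_sum]
    have hwin := sum_Ico_window_le (fun m => ‖z (m+1) - z m‖^2)
      (fun m => by positivity) τ (K+1)
    have hSnn : 0 ≤ ∑ k ∈ range (K+1), ‖z (k+1) - z k‖^2 :=
      Finset.sum_nonneg (fun i _ => by positivity)
    have h4 := mul_le_mul_of_nonneg_left hwin
      (mul_nonneg (mul_nonneg hL.le (sq_nonneg ((τ:ℝ)+1))) hτR)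
    rw [hsplit]
    nlinarith [h4, hSnn, hkey, mul_le_mul_of_nonneg_right hkey hSnn]
  have hP := P K
  have hRnn : (0:ℝ) ≤ (θ K)^2 * (‖xstar - z (K+1)‖^2/(2*γ)) := by positivity
  have hmono : (θ K)^2 * (‖xstar - z 0‖^2/(2*γ) + ∑ k ∈ range (K+1), c k)
      ≤ (θ K)^2 * (‖xstar - z 0‖^2/(2*γ)) :=
    mul_le_mul_of_nonneg_left (by linarith [hCsum]) (by positivity)
  have hfin : f (x (K+1)) + h (x (K+1)) - (f xstar + h xstar)
      ≤ (θ K)^2 * (‖xstar - z 0‖^2/(2*γ)) := by linarith [hP, hRnn, hmono]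
  have hz0 : ‖xstar - z 0‖ = ‖z 0 - xstar‖ := norm_sub_rev _ _
  rw [hz0] at hfin
  calc f (x (K+1)) + h (x (K+1)) - (f xstar + h xstar)
      ≤ (θ K)^2 * (‖z 0 - xstar‖^2/(2*γ)) := hfin
    _ = (θ K)^2 * (1/(2*γ) * ‖z 0 - xstar‖^2) := by ring
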